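/- In the infinite dihedral group D_∞ = ⟨r, t | t² = 1, trt = r⁻¹⟩, the power graph is not equal to the enhanced power graph, but the enhanced power graph equals the commuting graph. -/

import Mathlib

open Subgroup

/-- The power graph of a group: `x ~ y` iff `x ≠ y` and one is a power of the other. -/
def powGraph (G : Type*) [Group G] : SimpleGraph G where
  Adj x y := x ≠ y ∧ (x ∈ zpowers y ∨ y ∈ zpowers x)
  symm := by refine ⟨?_⟩; rintro x y ⟨h1, h2⟩; exact ⟨h1.symm, h2.symm⟩
  loopless := by refine ⟨?_⟩; rintro x ⟨h1, _⟩; exact h1 rfl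

/-- The enhanced power graph: `x ~ y` iff `x ≠ y` and `⟨x, y⟩` is cyclic. -/
def epowGraph (G : Type*) [Group G] : SimpleGraph G where
  Adj x y := x ≠ y ∧ IsCyclic (closure ({x, y} : Set G))
  symm := by
    refine ⟨?_⟩
    rintro x y ⟨h1, h2⟩
    refine ⟨h1.symm, ?_⟩
    rwa [Set.pair_comm y x]
  loopless := by refine ⟨?_⟩; rintro x ⟨h1, _⟩; exact h1 rfl

/-- The commuting graph: `x ~ y` iff `x ≠ y` and `x y = y x`. -/
def comGraph (G : Type*) [Group G] : SimpleGraph G where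
  Adj x y := x ≠ y ∧ x * y = y * x
  symm := by refine ⟨?_⟩; rintro x y ⟨h1, h2⟩; exact ⟨h1.symm, h2.symm⟩
  loopless := by refine ⟨?_⟩; rintro x ⟨h1, _⟩; exact h1 rfl

/-- `G` has a subgroup isomorphic to `H`. -/
def HasSubgroupIso (G : Type*) [Group G] (H : Type*) [Group H] : Prop :=
  ∃ K : Subgroup G, Nonempty (K ≃* H)

namespace InfDihAux

open DihedralGroup

abbrev D := DihedralGroup 0

def rHom : Multiplicative ℤ →* D where
  toFun n := r n.toAdd
  map_one' := rfl
  map_mul' a b := (r_mul_r _ _).symm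

lemma rHom_inj : Function.Injective rHom := by
  intro a b h
  have h' : (@r 0 (Multiplicative.toAdd a) : D) = @r 0 (Multiplicative.toAdd b) := h
  exact Multiplicative.toAdd.injective (DihedralGroup.r.inj (n := 0) h')

lemma r_zpow (i k : ℤ) : (r i : D) ^ k = r (k * i) := by
  have : (r i : D) = rHom (Multiplicative.ofAdd i) := rfl
  rw [this, ← map_zpow, ← ofAdd_zsmul]
  exact congrArg r (smul_eq_mul k i)

instance : IsCyclic rHom.range :=
  isCyclic_of_surjective (MonoidHom.ofInjective rHom_inj)
    (MonoidHom.ofInjective rHom_inj).surjective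

instance zpowers_cyclic (x : D) : IsCyclic (zpowers x) := by
  refine ⟨⟨x, mem_zpowers x⟩, ?_⟩
  rintro ⟨g, k, rfl⟩
  exact ⟨k, by ext; simp⟩

lemma cyclic_of_le {H K : Subgroup D} [IsCyclic K] (h : H ≤ K) : IsCyclic H :=
  isCyclic_of_surjective (subgroupOfEquivOfLe h) (subgroupOfEquivOfLe h).surjective

lemma r_mem_range (i : ℤ) : (r i : D) ∈ rHom.range := ⟨Multiplicative.ofAdd i, rfl⟩

end InfDihAux

open InfDihAux DihedralGroup in
theorem infinite_dihedral_graphs :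
    powGraph (DihedralGroup 0) ≠ epowGraph (DihedralGroup 0) ∧
      epowGraph (DihedralGroup 0) = comGraph (DihedralGroup 0) := by
  constructor
  · intro h
    have h23 : (epowGraph D).Adj (r 2) (r 3) := by
      refine ⟨by simp, cyclic_of_le (K := rHom.range) ((closure_le _).mpr ?_)⟩
      intro z hz
      rcases hz with rfl | rfl
      · exact r_mem_range 2
      · exact r_mem_range 3
    rw [← h] at h23
    rcases h23.2 with ⟨k, hk⟩ | ⟨k, hk⟩
    · have hk' : (r (3:ℤ) : D) ^ k = r 2 := hk
      rw [InfDihAux.r_zpow] at hk'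
      have : k * 3 = (2:ℤ) := DihedralGroup.r.inj (n := 0) hk'
      omega
    · have hk' : (r (2:ℤ) : D) ^ k = r 3 := hk
      rw [InfDihAux.r_zpow] at hk'
      have : k * 2 = (3:ℤ) := DihedralGroup.r.inj (n := 0) hk'
      omega
  · ext x y
    constructor
    · rintro ⟨hne, hcyc⟩
      refine ⟨hne, ?_⟩
      have hx : x ∈ closure ({x, y} : Set D) := subset_closure (by simp)
      have hy : y ∈ closure ({x, y} : Set D) := subset_closure (by simp)
      letI := hcyc.commGroup
      have := mul_comm (⟨x, hx⟩ : closure ({x, y} : Set D)) ⟨y, hy⟩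
      exact congrArg Subtype.val this
    · rintro ⟨hne, hc⟩
      refine ⟨hne, ?_⟩
      match x, y with
      | r i, r j =>
        refine cyclic_of_le (K := rHom.range) ((closure_le _).mpr ?_)
        rintro z (rfl | rfl)
        · exact r_mem_range i
        · exact r_mem_range j
      | r i, sr j =>
        rw [r_mul_sr, sr_mul_r, DihedralGroup.sr.injEq] at hc
        have key : ∀ a b : ℤ, b - a = b + a → a = 0 := by intro a b h; omega
        have hx1 : (r i : D) = 1 := congrArg r (key i j hc)
        refine cyclic_of_le (K := zpowers (sr j)) ((closure_le _).mpr ?_)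
        rintro z (rfl | rfl)
        · rw [hx1]; exact one_mem _
        · exact mem_zpowers _
      | sr i, r j =>
        rw [sr_mul_r, r_mul_sr, DihedralGroup.sr.injEq] at hc
        have key : ∀ a b : ℤ, b + a = b - a → a = 0 := by intro a b h; omega
        have hy1 : (r j : D) = 1 := congrArg r (key j i hc)
        refine cyclic_of_le (K := zpowers (sr i)) ((closure_le _).mpr ?_)
        rintro z (rfl | rfl)
        · exact mem_zpowers _
        · rw [hy1]; exact one_mem _
      | sr i, sr j =>
        exfalso
        rw [sr_mul_sr, sr_mul_sr, DihedralGroup.r.injEq] at hc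
        have key : ∀ a b : ℤ, b - a = a - b → a = b := by intro a b h; omega
        exact hne (congrArg sr (key i j hc))
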